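/- Let λ² = E be a positive integer and let P₁, …, Pₘ be distinct points of ℤ² (identified with Gaussian integers) with |Pⱼ|² = E for all j. Then ∏_{1 ≤ i < j ≤ m} |Pᵢ − Pⱼ| ≥ λ^{m/2·(m/2 − 1)} if m is even, and ≥ λ^{(m−1)²/4} if m is odd. -/

import Mathlib

noncomputable def toC (p : ℤ × ℤ) : ℂ := (p.1 : ℂ) + (p.2 : ℂ) * Complex.I

open Finset GaussianInt Matrix

lemma toC_injective : Function.Injective toC := by
  intro p q h
  have h1 : ((p.1 : ℝ)) = (q.1 : ℝ) := by
    have := congrArg Complex.re h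
    simpa [toC] using this
  have h2 : ((p.2 : ℝ)) = (q.2 : ℝ) := by
    have := congrArg Complex.im h
    simpa [toC] using this
  have : p.1 = q.1 := by exact_mod_cast h1
  have : p.2 = q.2 := by exact_mod_cast h2
  exact Prod.ext (by exact_mod_cast h1) (by exact_mod_cast h2)

lemma gauss_sum_aux : ∀ n : ℕ, 2 * (∑ t ∈ Finset.range n, (n - t)) = n * (n + 1) := by
  intro n
  induction n with
  | zero => simp
  | succ p ih =>
    have h1 : ∑ t ∈ Finset.range (p+1), (p + 1 - t) =
        (∑ t ∈ Finset.range p, (p - t)) + (p+1) := by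
      rw [Finset.sum_range_succ]
      have hc : ∀ t ∈ Finset.range p, p + 1 - t = (p - t) + 1 := fun t ht => by
        have := Finset.mem_range.1 ht; omega
      rw [Finset.sum_congr rfl hc, Finset.sum_add_distrib, Finset.sum_const,
        Finset.card_range, smul_eq_mul, mul_one]
      omega
    rw [h1, Nat.mul_add, ih]
    ring

open Finset in
/-- Cilleruelo–Córdoba / Cilleruelo–Granville product lower bound for distinct
lattice points on the circle of radius `λ = √E`. -/
theorem stmt_3 (E : ℕ) (hE : 0 < E) (lam : ℝ) (hlam : lam = Real.sqrt E)
    (m : ℕ) (P : Fin m → ℤ × ℤ) (hinj : Function.Injective P)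
    (hcirc : ∀ j, (P j).1 ^ 2 + (P j).2 ^ 2 = (E : ℤ)) :
    (∏ i : Fin m, ∏ j ∈ Finset.Ioi i, ‖toC (P i) - toC (P j)‖) ≥
      if Even m then lam ^ (m / 2 * (m / 2 - 1)) else lam ^ ((m - 1) ^ 2 / 4) := by
  set k := m / 2 with hk
  set z : Fin m → ℂ := fun j => toC (P j) with hz
  set g : Fin m → GaussianInt := fun j => ⟨(P j).1, (P j).2⟩ with hg
  have hzg : ∀ j, (GaussianInt.toComplex (g j)) = z j := by
    intro j; simp [hg, hz, GaussianInt.toComplex_def, toC]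
  -- normSq of z j is E
  have hnsq : ∀ j, Complex.normSq (z j) = (E : ℝ) := by
    intro j
    have h' : ((P j).1 : ℝ) ^ 2 + ((P j).2 : ℝ) ^ 2 = (E : ℝ) := by
      exact_mod_cast hcirc j
    simp only [hz, toC, Complex.normSq_apply, Complex.add_re, Complex.add_im,
      Complex.intCast_re, Complex.intCast_im, Complex.mul_re, Complex.mul_im,
      Complex.I_re, Complex.I_im]
    ring_nf
    ring_nf at h'
    linarith [h']
  have hzE : ∀ j, z j * (starRingEnd ℂ) (z j) = (E : ℂ) := by
    intro j
    rw [Complex.mul_conj, hnsq j]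
    norm_cast
  have habsz : ∀ j, ‖z j‖ = lam := by
    intro j
    rw [Complex.norm_def, hnsq j, hlam]
  have hzinj : Function.Injective z := by
    intro a b hab
    exact hinj (toC_injective hab)
  have hzne : ∀ j, z j ≠ 0 := by
    intro j h
    have h2 := hnsq j
    rw [h, map_zero] at h2
    have hE' : (E : ℝ) ≠ 0 := by positivity
    exact hE' h2.symm
  -- the Gaussian-integer matrix
  set G : Matrix (Fin m) (Fin m) GaussianInt :=
    Matrix.of (fun j t : Fin m =>
      if (t : ℕ) < k then (star (g j)) ^ (k - (t : ℕ)) else (g j) ^ ((t : ℕ) - k)) with hG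
  set B : Matrix (Fin m) (Fin m) ℂ := G.map GaussianInt.toComplex with hB
  have hBdet : B.det = GaussianInt.toComplex G.det := ((GaussianInt.toComplex).map_det G).symm
  set c : Fin m → ℂ := fun t => if (t : ℕ) < k then (E : ℂ) ^ (k - (t : ℕ)) else 1 with hc
  -- key determinant identity
  have hentry : ∀ (j t : Fin m), z j ^ k * B j t = c t * z j ^ (t : ℕ) := by
    intro j t
    have hBjt : B j t = if (t : ℕ) < k then ((starRingEnd ℂ) (z j)) ^ (k - (t : ℕ))
        else (z j) ^ ((t : ℕ) - k) := by
      simp only [hB, Matrix.map_apply, hG, Matrix.of_apply]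
      split
      · rw [map_pow, GaussianInt.toComplex_star, hzg]
      · rw [map_pow, hzg]
    rw [hBjt]
    by_cases ht : (t : ℕ) < k
    · rw [if_pos ht, hc]
      simp only [if_pos ht]
      have h2 : z j ^ k = z j ^ (k - (t : ℕ)) * z j ^ (t : ℕ) := by
        rw [← pow_add]; congr 1; omega
      rw [h2, ← hzE j, mul_pow]
      ring
    · rw [if_neg ht, hc]
      simp only [if_neg ht, one_mul]
      rw [← pow_add]
      congr 1
      omega
  have key : (∏ j, z j ^ k) * B.det = (∏ t, c t) * (Matrix.vandermonde z).det := by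
    calc (∏ j, z j ^ k) * B.det
        = Matrix.det (Matrix.of fun j t => z j ^ k * B j t) :=
          (Matrix.det_mul_column _ _).symm
      _ = Matrix.det (Matrix.of fun j t => c t * Matrix.vandermonde z j t) := by
          congr 1
          ext j t
          simp only [Matrix.of_apply, Matrix.vandermonde_apply]
          exact hentry j t
      _ = (∏ t, c t) * (Matrix.vandermonde z).det := Matrix.det_mul_row _ _
  -- nonvanishing
  have hVne : (Matrix.vandermonde z).det ≠ 0 :=
    Matrix.det_vandermonde_ne_zero_iff.2 hzinj
  have hcne : ∀ t, c t ≠ 0 := by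
    intro t
    simp only [hc]
    split
    · exact pow_ne_zero _ (by exact_mod_cast hE.ne')
    · exact one_ne_zero
  have hBne : B.det ≠ 0 := by
    intro h
    rw [h, mul_zero] at key
    exact (mul_ne_zero (Finset.prod_ne_zero_iff.2 fun t _ => hcne t) hVne) key.symm
  have hGne : G.det ≠ 0 := by
    intro h
    apply hBne
    rw [hBdet, h, map_zero]
  -- |det B| ≥ 1
  have habsB : 1 ≤ ‖B.det‖ := by
    have hnormpos : 1 ≤ G.det.norm := by
      have h0 : 0 ≤ G.det.norm := Zsqrtd.norm_nonneg (by norm_num) _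
      have hne : G.det.norm ≠ 0 := fun h =>
        hGne ((Zsqrtd.norm_eq_zero_iff (by norm_num) _).1 h)
      omega
    have h1 : Complex.normSq B.det = (G.det.norm : ℝ) := by
      rw [hBdet, ← GaussianInt.intCast_real_norm]
    rw [Complex.norm_def, h1]
    have : (1 : ℝ) ≤ (G.det.norm : ℝ) := by exact_mod_cast hnormpos
    nlinarith [Real.sq_sqrt (le_trans zero_le_one this),
      Real.sqrt_nonneg ((G.det.norm : ℝ))]
  -- sums and exponents
  set S : ℕ := ∑ t ∈ Finset.range m, (if t < k then k - t else 0) with hS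
  have hS2 : 2 * S = k * (k + 1) := by
    have hkm : k ≤ m := Nat.div_le_self m 2
    have h1 : S = ∑ t ∈ Finset.range k, (k - t) := by
      rw [hS]
      rw [← Finset.sum_subset (Finset.range_subset_range.2 hkm)
        (fun t _ ht => if_neg (by simpa using ht))]
      exact Finset.sum_congr rfl fun t ht => if_pos (Finset.mem_range.1 ht)
    rw [h1, gauss_sum_aux]
  set T : ℕ := if Even m then m / 2 * (m / 2 - 1) else (m - 1) ^ 2 / 4 with hT
  have hexp : k * m = 2 * S + T := by
    rw [hS2, hT]
    rcases Nat.even_or_odd m with hm | hm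
    · obtain ⟨r, hr⟩ := hm
      have hkr : k = r := by omega
      rw [if_pos ⟨r, hr⟩, ← hk, hkr, hr]
      rcases r with _ | s
      · simp
      · simp only [Nat.add_sub_cancel]
        ring
    · obtain ⟨r, hr⟩ := hm
      have hkr : k = r := by omega
      have hodd : ¬ Even m := by
        rw [hr]; exact fun h => (Nat.even_add_one.1 (by simpa using h)) (even_two_mul r)
      rw [if_neg hodd, hkr, hr]
      have h4 : (2 * r + 1 - 1) ^ 2 / 4 = r ^ 2 := by
        have h5 : 2 * r + 1 - 1 = 2 * r := by omega
        have : (2 * r + 1 - 1) ^ 2 = 4 * r ^ 2 := by rw [h5]; ring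
        rw [this, Nat.mul_div_cancel_left _ (by norm_num)]
      rw [h4]
      ring
  -- take absolute values of key
  have hlam1 : 1 ≤ lam := by
    rw [hlam]
    rw [show (1:ℝ) = Real.sqrt 1 by simp]
    exact Real.sqrt_le_sqrt (by exact_mod_cast hE)
  have hlampos : 0 < lam := lt_of_lt_of_le zero_lt_one hlam1
  have habskey : lam ^ (k * m) * ‖B.det‖ =
      (E : ℝ) ^ S * ‖(Matrix.vandermonde z).det‖ := by
    have h := congrArg (‖·‖) key
    rw [norm_mul, norm_mul, norm_prod, norm_prod] at h
    have h1 : ∏ j, ‖z j ^ k‖ = lam ^ (k * m) := by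
      have : ∀ j, ‖z j ^ k‖ = lam ^ k := by
        intro j; rw [norm_pow, habsz j]
      rw [Finset.prod_congr rfl fun j _ => this j, Finset.prod_const, Finset.card_univ,
        Fintype.card_fin, ← pow_mul]
    have h2 : ∏ t, ‖c t‖ = (E : ℝ) ^ S := by
      have hct : ∀ t : Fin m, ‖c t‖ =
          (E : ℝ) ^ (if (t : ℕ) < k then k - (t : ℕ) else 0) := by
        intro t
        simp only [hc]
        split
        · rw [norm_pow, Complex.norm_natCast]
        · simp
      rw [Finset.prod_congr rfl fun t _ => hct t,
        Finset.prod_pow_eq_pow_sum, hS, ← Fin.sum_univ_eq_sum_range]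
    rw [h1, h2] at h
    exact h
  have hEl : (E : ℝ) = lam ^ 2 := by
    rw [hlam, Real.sq_sqrt (by positivity)]
  -- conclude
  have hVabs : ‖(Matrix.vandermonde z).det‖ = lam ^ T * ‖B.det‖ := by
    have hcancel : lam ^ (2 * S) * (lam ^ T * ‖B.det‖) =
        lam ^ (2 * S) * ‖(Matrix.vandermonde z).det‖ := by
      rw [← mul_assoc, ← pow_add, ← hexp, habskey, hEl, ← pow_mul]
    exact (mul_left_cancel₀ (by positivity) hcancel).symm
  have hgoal : (∏ i : Fin m, ∏ j ∈ Finset.Ioi i, ‖toC (P i) - toC (P j)‖) =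
      ‖(Matrix.vandermonde z).det‖ := by
    rw [Matrix.det_vandermonde, norm_prod]
    refine Finset.prod_congr rfl fun i _ => ?_
    rw [norm_prod]
    refine Finset.prod_congr rfl fun j _ => ?_
    rw [norm_sub_rev]
  have hfinal : (if Even m then lam ^ (m / 2 * (m / 2 - 1)) else lam ^ ((m - 1) ^ 2 / 4))
      = lam ^ T := by
    rw [hT]
    split <;> rfl
  rw [ge_iff_le, hfinal, hgoal, hVabs]
  nlinarith [pow_pos hlampos T]
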